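/- Let D be a Bézout domain with quotient field K, let x, y ∈ D be nonzero with xD + yD = D, and suppose there is a nonzero c ∈ D such that c·(x/y)ⁿ ∈ D for all positive integers n. Then c·y⁻ⁿ ∈ D for all positive integers n. -/

import Mathlib

/-- `z ∈ K` is almost integral over `D` if there is a nonzero `c ∈ D` with
`c·zⁿ ∈ D` for every positive integer `n`. -/
def AlmostIntegral (D : Type*) {K : Type*} [CommRing D] [CommRing K] [Algebra D K]
    (z : K) : Prop :=
  ∃ c : D, c ≠ 0 ∧ ∀ n : ℕ, 0 < n → ∃ d : D, algebraMap D K c * z ^ n = algebraMap D K d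

/-- In a Bézout domain, if `x` and `y` are coprime and `c·(x/y)ⁿ ∈ D` for all
`n ≥ 1`, then `c·y⁻ⁿ ∈ D` for all `n ≥ 1`. -/
theorem stmt11 (D K : Type*) [CommRing D] [IsDomain D] [IsBezout D] [Field K]
    [Algebra D K] [IsFractionRing D K] (x y c : D) (hx : x ≠ 0) (hy : y ≠ 0)
    (hcop : IsCoprime x y) (hc : c ≠ 0)
    (h : ∀ n : ℕ, 0 < n →
      ∃ d : D, algebraMap D K c * (algebraMap D K x / algebraMap D K y) ^ n = algebraMap D K d) :
    ∀ n : ℕ, 0 < n →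
      ∃ d : D, algebraMap D K c * ((algebraMap D K y)⁻¹) ^ n = algebraMap D K d := by
  intro n hn
  obtain ⟨d, hd⟩ := h n hn
  set f := algebraMap D K
  have hf : Function.Injective f := IsFractionRing.injective D K
  have hyK : f y ≠ 0 := fun hh => hy (hf (by simpa using hh))
  have hynK : (f y) ^ n ≠ 0 := pow_ne_zero _ hyK
  -- c * x^n = d * y^n in D
  have key : c * x ^ n = d * y ^ n := by
    apply hf
    have : f c * (f x / f y) ^ n * (f y) ^ n = f d * (f y) ^ n := by rw [hd]
    rw [div_pow, mul_assoc, div_mul_cancel₀ _ hynK] at this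
    simpa [f, map_mul, map_pow, mul_assoc] using this
  have hdvd : y ^ n ∣ c := by
    refine (hcop.pow (m := n) (n := n)).symm.dvd_of_dvd_mul_left ?_
    exact ⟨d, by linear_combination key⟩
  obtain ⟨e, he⟩ := hdvd
  refine ⟨e, ?_⟩
  have : f c = f y ^ n * f e := by rw [he]; simp [f, map_mul, map_pow]
  rw [this]
  field_simp
  rw [one_div, inv_pow, mul_right_comm, mul_inv_cancel₀ hynK, one_mul]
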